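/- arXiv:2212.13189 — 2 statements merged into one kernel-verified Lean document; each statement's English description precedes it below -/
import Mathlib

section
/- For the framework of Example 3.3(a) with vertices p₁=(1,2), p₂=(-1,1), p₃=(-1,-1), p₄=(2,-1), p₅=(0,0) and edges {1,2},{2,3},{3,4},{4,1},{1,5},{2,5},{3,5},{4,5}, the assignment w({1,2}) = w({3,4}) = 0 is NOT forced: there exists a self-stress w with w({1,5}) ≠ 0. -/
/-- The primitive integer vector in the direction of `u`. -/
def primVec {d : ℕ} (u : Fin d → ℤ) : Fin d → ℤ :=
  fun i => u i / Finset.univ.gcd u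

/-- Vertex placement of Example 3.3(a). -/
def pA : Fin 5 → Fin 2 → ℤ := ![![1,2], ![-1,1], ![-1,-1], ![2,-1], ![0,0]]

/-- Edges of Example 3.3(a), 1-based. -/
def edgesA : List (ℕ × ℕ) := [(1,2),(2,3),(3,4),(4,1),(1,5),(2,5),(3,5),(4,5)]

/-- Adjacency relation of Example 3.3(a). -/
def AdjA (i j : Fin 5) : Prop :=
  (i.val + 1, j.val + 1) ∈ edgesA ∨ (j.val + 1, i.val + 1) ∈ edgesA

instance : ∀ i, DecidablePred (AdjA i) := fun _ _ => by unfold AdjA; infer_instance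

/-- Self-stress: symmetric, supported on edges, balanced at each vertex. -/
def SelfStressA (w : Fin 5 → Fin 5 → ℚ) : Prop :=
  (∀ i j, w i j = w j i) ∧ (∀ i j, ¬ AdjA i j → w i j = 0) ∧
    ∀ i, ∑ j ∈ Finset.univ.filter (AdjA i),
      w i j • (fun k => (primVec (pA j - pA i) k : ℚ)) = (0 : Fin 2 → ℚ)

/-- An explicit self-stress. -/
def wA : Fin 5 → Fin 5 → ℚ :=
  ![![0,5,0,3,-7], ![5,0,15,0,-10], ![0,15,0,15,-15], ![3,0,15,0,-9], ![-7,-10,-15,-9,0]]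

/-- Table of primitive direction vectors. -/
def ptA : Fin 5 → Fin 5 → Fin 2 → ℤ :=
  ![![![0,0], ![-2,-1], ![-2,-3], ![1,-3], ![-1,-2]],
    ![![2,1], ![0,0], ![0,-1], ![3,-2], ![1,-1]],
    ![![2,3], ![0,1], ![0,0], ![1,0], ![1,1]],
    ![![-1,3], ![-3,2], ![-1,0], ![0,0], ![-2,1]],
    ![![1,2], ![-1,1], ![-1,-1], ![2,-1], ![0,0]]]

lemma hv3 : ((3 : Fin 5) : ℕ) = 3 := rfl
lemma hv4 : ((4 : Fin 5) : ℕ) = 4 := rfl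

lemma hprim : ∀ i j : Fin 5, primVec (pA j - pA i) = ptA i j := by decide

/-- for the framework of Example 3.3(a), there exists a self-stress `w`
which is nonzero on the spoke edge `{1,5}`; in particular `w({1,2}) = w({3,4}) = 0` is
not forced. -/
theorem exampleA_exists_selfStress_nonzero_on_spoke :
    ∃ w : Fin 5 → Fin 5 → ℚ, SelfStressA w ∧ w 0 4 ≠ 0 := by
  refine ⟨wA, ⟨?_, ?_, ?_⟩, by simp [wA]⟩
  · decide
  · decide
  · intro i
    fin_cases i <;>
    · funext k
      rw [Finset.sum_apply, Finset.sum_filter, Fin.sum_univ_five]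
      simp only [hprim]
      fin_cases k <;>
      · simp [wA, ptA, AdjA, edgesA, Fin.ext_iff, hv3, hv4] <;> norm_num
end

section
/- The map sending a Minkowski-type weight c on the set of lifted edges to the stress w(f) := c(ray over f) is a ℚ-linear isomorphism between the space of weights c : E(G) → ℚ satisfying, for every vertex i and every (m,t) ∈ ℤ³ with ⟨m,p_i⟩ + t = 0, the relation ∑_{j ~ i} c({i,j}) ⟨(m,t), (p_i + (p_j-p_i)^prim, 1)⟩ = 0, and the space of self-stresses on the planar framework (V, E, p). -/
/-- Proposition 3.2: the map `c ↦ (w : f ↦ c(ray over f))` is a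
ℚ-linear isomorphism between the space of Minkowski-type weights on the lifted edges
(weights `c` satisfying, at each vertex `i` and each `(m,t) ∈ ℤ³` with `⟨m,p_i⟩+t = 0`,
the relation `∑_{j~i} c({i,j})⟨(m,t),(p_i+(p_j-p_i)^prim,1)⟩ = 0`) and the space of
self-stresses of the planar framework. -/
theorem minkowski_weights_equiv_selfStresses {V : Type} [Fintype V] [DecidableEq V]
    (Adj : V → V → Prop) [∀ i, DecidablePred (Adj i)] (hsym : ∀ i j, Adj i j → Adj j i)
    (p : V → Fin 2 → ℤ) (hinj : Function.Injective p)
    (W : Submodule ℚ (V → V → ℚ))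
    (hW : ∀ c, c ∈ W ↔ ((∀ i j, c i j = c j i) ∧ (∀ i j, ¬ Adj i j → c i j = 0) ∧
      ∀ i : V, ∀ (m : Fin 2 → ℤ) (t : ℤ), (∑ k, m k * p i k) + t = 0 →
        ∑ j ∈ Finset.univ.filter (Adj i),
          c i j * (((∑ k, m k * (p i k + primVec (p j - p i) k)) + t * 1 : ℤ) : ℚ) = 0))
    (S : Submodule ℚ (V → V → ℚ))
    (hS : ∀ w, w ∈ S ↔ ((∀ i j, w i j = w j i) ∧ (∀ i j, ¬ Adj i j → w i j = 0) ∧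
      ∀ i : V, ∑ j ∈ Finset.univ.filter (Adj i),
        w i j • (fun k => (primVec (p j - p i) k : ℚ)) = (0 : Fin 2 → ℚ))) :
    ∃ φ : W ≃ₗ[ℚ] S, ∀ c : W, ((φ c : V → V → ℚ)) = (c : V → V → ℚ) := by
  have key : W = S := by
    ext c
    rw [hW, hS]
    constructor
    · rintro ⟨h1, h2, h3⟩
      refine ⟨h1, h2, fun i => ?_⟩
      funext k
      have hm := h3 i (fun k' => if k' = k then 1 else 0) (-(p i k))
        (by simp [Finset.sum_ite_eq'])
      simp only [Finset.sum_apply, Pi.smul_apply, smul_eq_mul, Pi.zero_apply]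
      rw [← hm]
      refine Finset.sum_congr rfl fun j hj => ?_
      congr 1
      have h4 : (∑ k', (if k' = k then 1 else 0 : ℤ) *
          (p i k' + primVec (p j - p i) k')) = p i k + primVec (p j - p i) k := by
        simp [Finset.sum_ite_eq', ite_mul]
      rw [h4]
      push_cast
      ring
    · rintro ⟨h1, h2, h3⟩
      refine ⟨h1, h2, fun i m t ht => ?_⟩
      have step : ∀ j, (((∑ k, m k * (p i k + primVec (p j - p i) k)) + t * 1 : ℤ) : ℚ)
          = ∑ k, (m k : ℚ) * (primVec (p j - p i) k : ℚ) := by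
        intro j
        have h5 : (∑ k, m k * (p i k + primVec (p j - p i) k)) + t * 1
            = ((∑ k, m k * p i k) + t) + ∑ k, m k * primVec (p j - p i) k := by
          simp only [mul_add, Finset.sum_add_distrib]
          ring
        rw [h5, ht]
        push_cast
        ring
      calc ∑ j ∈ Finset.univ.filter (Adj i),
            c i j * (((∑ k, m k * (p i k + primVec (p j - p i) k)) + t * 1 : ℤ) : ℚ)
          = ∑ j ∈ Finset.univ.filter (Adj i),
            ∑ k, (m k : ℚ) * (c i j * (primVec (p j - p i) k : ℚ)) := by
            refine Finset.sum_congr rfl fun j hj => ?_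
            rw [step j, Finset.mul_sum]
            refine Finset.sum_congr rfl fun k _ => by ring
        _ = ∑ k, (m k : ℚ) * ∑ j ∈ Finset.univ.filter (Adj i),
              c i j * (primVec (p j - p i) k : ℚ) := by
            rw [Finset.sum_comm]
            exact Finset.sum_congr rfl fun k _ => (Finset.mul_sum _ _ _).symm
        _ = 0 := by
            refine Finset.sum_eq_zero fun k _ => ?_
            have := congrFun (h3 i) k
            simp only [Finset.sum_apply, Pi.smul_apply, smul_eq_mul, Pi.zero_apply] at this
            rw [this, mul_zero]
  exact ⟨LinearEquiv.ofEq W S key, fun c => rfl⟩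
end
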